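/- Let f : ℝ → ℝ be C³ with f'(y) > 0 for all y. Fix c ∈ ℝ and set p = f'(c), q = f'(c)·c + f(c), and φ(y) = q − p·y − f((q − f(y))/p). Then φ(c) = 0, φ'(c) = 0, φ''(c) = 0, and φ'''(c) = 2·f'''(c) − 3·f''(c)²/f'(c). -/

import Mathlib

/-- Let `f` be `C³` with `f' > 0`, and on the flip curve set `p = f'(c)`,
`q = f'(c)·c + f(c)`, `φ(y) = q − p·y − f((q − f(y))/p)`. Then
`φ(c) = φ'(c) = φ''(c) = 0` and `φ'''(c) = 2·f'''(c) − 3·f''(c)²/f'(c)`. -/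
theorem flip_point_derivatives (f : ℝ → ℝ) (hf : ContDiff ℝ 3 f)
    (hpos : ∀ y : ℝ, 0 < deriv f y) (c : ℝ)
    (p q : ℝ) (hp : p = deriv f c) (hq : q = deriv f c * c + f c) :
    (fun y => q - p * y - f ((q - f y) / p)) c = 0 ∧
    deriv (fun y => q - p * y - f ((q - f y) / p)) c = 0 ∧
    iteratedDeriv 2 (fun y => q - p * y - f ((q - f y) / p)) c = 0 ∧
    iteratedDeriv 3 (fun y => q - p * y - f ((q - f y) / p)) c
      = 2 * iteratedDeriv 3 f c - 3 * (iteratedDeriv 2 f c) ^ 2 / deriv f c := by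
  set f1 := deriv f with hf1def
  set f2 := deriv f1 with hf2def
  set f3 := deriv f2 with hf3def
  have hpne : p ≠ 0 := by rw [hp]; exact (hpos c).ne'
  -- regularity
  have hC2 : ContDiff ℝ 2 f1 := by
    have h := (contDiff_succ_iff_deriv.mp (show ContDiff ℝ ((2:ℕ)+1) f by exact_mod_cast hf)).2
    exact_mod_cast h.2
  have hC1 : ContDiff ℝ 1 f2 := by
    have h := (contDiff_succ_iff_deriv.mp (show ContDiff ℝ ((1:ℕ)+1) f1 by exact_mod_cast hC2)).2
    exact_mod_cast h.2
  have hdf : Differentiable ℝ f := hf.differentiable (by norm_num)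
  have hdf1 : Differentiable ℝ f1 := hC2.differentiable (by norm_num)
  have hdf2 : Differentiable ℝ f2 := hC1.differentiable (by norm_num)
  set g : ℝ → ℝ := fun y => (q - f y) / p with hgdef
  have hne : f1 c ≠ 0 := (hpos c).ne'
  have hgc : g c = c := by
    simp only [hgdef, hq, hp]
    field_simp
    ring
  have hg : ∀ y, HasDerivAt g (-f1 y / p) y := by
    intro y
    have : HasDerivAt (fun y => (q - f y) / p) ((0 - f1 y) / p) y :=
      ((hasDerivAt_const y q).sub (hdf y).hasDerivAt).div_const p
    simpa using this
  set φ1 : ℝ → ℝ := fun y => -p + f1 (g y) * f1 y / p with hφ1def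
  set φ2 : ℝ → ℝ := fun y =>
    (-(f2 (g y)) * (f1 y) ^ 2 / p + f1 (g y) * f2 y) / p with hφ2def
  have hφ : ∀ y, HasDerivAt (fun y => q - p * y - f (g y)) (φ1 y) y := by
    intro y
    have hcomp : HasDerivAt (fun y => f (g y)) (f1 (g y) * (-f1 y / p)) y :=
      (hdf (g y)).hasDerivAt.comp y (hg y)
    have := (((hasDerivAt_const y q).sub ((hasDerivAt_id y).const_mul p)).sub hcomp)
    refine this.congr_deriv ?_
    simp only [hφ1def]
    field_simp
    ring
  have hφ1 : ∀ y, HasDerivAt φ1 (φ2 y) y := by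
    intro y
    have hcomp : HasDerivAt (fun y => f1 (g y)) (f2 (g y) * (-f1 y / p)) y :=
      (hdf1 (g y)).hasDerivAt.comp y (hg y)
    have : HasDerivAt (fun y => -p + f1 (g y) * f1 y / p)
        (0 + ((f2 (g y) * (-f1 y / p)) * f1 y + f1 (g y) * f2 y) / p) y :=
      (hasDerivAt_const y (-p)).add ((hcomp.mul (hdf1 y).hasDerivAt).div_const p)
    refine this.congr_deriv ?_
    simp only [hφ2def]
    field_simp
    ring
  have hφ2 : HasDerivAt φ2
      ((-(f3 (g c) * (-f1 c / p)) * (f1 c) ^ 2 / p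
        + (-(f2 (g c))) * (2 * f1 c ^ 1 * f2 c) / p
        + (f2 (g c) * (-f1 c / p) * f2 c + f1 (g c) * f3 c)) / p) c := by
    have hcompf2 : HasDerivAt (fun y => f2 (g y)) (f3 (g c) * (-f1 c / p)) c :=
      (hdf2 (g c)).hasDerivAt.comp c (hg c)
    have hcompf1 : HasDerivAt (fun y => f1 (g y)) (f2 (g c) * (-f1 c / p)) c :=
      (hdf1 (g c)).hasDerivAt.comp c (hg c)
    have hpow : HasDerivAt (fun y => (f1 y) ^ 2) (2 * f1 c ^ 1 * f2 c) c :=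
      (hdf1 c).hasDerivAt.pow 2
    have h1 : HasDerivAt (fun y => -(f2 (g y)) * (f1 y) ^ 2 / p)
        ((-(f3 (g c) * (-f1 c / p)) * (f1 c) ^ 2
          + (-(f2 (g c))) * (2 * f1 c ^ 1 * f2 c)) / p) c :=
      ((hcompf2.neg.mul hpow).div_const p)
    have h2 : HasDerivAt (fun y => f1 (g y) * f2 y)
        (f2 (g c) * (-f1 c / p) * f2 c + f1 (g c) * f3 c) c := by
      have := hcompf1.mul (hdf2 c).hasDerivAt
      refine this.congr_deriv ?_
      ring
    have := (h1.add h2).div_const p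
    refine this.congr_deriv ?_
    field_simp
  have hd1 : deriv (fun y => q - p * y - f ((q - f y) / p)) = φ1 := by
    funext y; exact (hφ y).deriv
  have hd2 : deriv φ1 = φ2 := by
    funext y; exact (hφ1 y).deriv
  refine ⟨?_, ?_, ?_, ?_⟩
  · have h : (q - f c) / p = c := hgc
    show q - p * c - f ((q - f c) / p) = 0
    rw [h, hq, hp]; ring
  · rw [hd1, hφ1def]
    simp only [hgc, hp]
    field_simp
    ring
  · rw [iteratedDeriv_succ, iteratedDeriv_one, hd1, hd2, hφ2def]
    simp only [hgc, hp]
    rw [← hp] at hne ⊢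
    field_simp
    ring
  · rw [iteratedDeriv_succ, iteratedDeriv_succ, iteratedDeriv_one, hd1, hd2, hφ2.deriv]
    have h2 : iteratedDeriv 2 f = f2 := by
      rw [iteratedDeriv_succ, iteratedDeriv_one]
    have h3 : iteratedDeriv 3 f = f3 := by
      rw [iteratedDeriv_succ, h2]
    rw [h2, h3, hgc, hp]
    field_simp
    ring
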